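/- Let φ ∈ F, x_φ the solution of the delay equation, u(t) = S_t φ, and define L: F → ℝ by Lψ = a ψ(0) + Σ_{i=1}^∞ b_i ψ(−τ_i). Then for t+θ > 0, [u(t)](θ) = φ(0) + ∫₀^{t+θ} L(u(s)) ds, and for t+θ ≤ 0, [u(t)](θ) = φ(t+θ); consequently u is a mild solution of the abstract Cauchy problem u' = Au, u(0) = φ, where Aψ = ψ' on D(A) = {ψ ∈ F : ψ' ∈ F, ψ'(0) = Lψ}. -/

import Mathlib

open Filter Set MeasureTheory

/-- sup_{s ∈ [0, kτ₁]} |b_i φ(s − τ_i)|  (τ₁ = τ 0 with ℕ-indexing). -/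
noncomputable def pTerm (b τ : ℕ → ℝ) (φ : ℝ → ℝ) (k i : ℕ) : ℝ :=
  ⨆ s : Set.Icc (0:ℝ) ((k : ℝ) * τ 0), |b i * φ ((s : ℝ) - τ i)|

/-- The seminorm p_k(φ) = Σ_{i ≥ n(k)} sup_{s ∈ [0,kτ₁]} |b_i φ(s − τ_i)|. -/
noncomputable def pSemi (b τ : ℕ → ℝ) (n : ℕ → ℕ) (φ : ℝ → ℝ) (k : ℕ) : ℝ :=
  ∑' i : ℕ, pTerm b τ φ k (n k + i)

/-- The seminorm ‖φ‖_k = sup_{θ ∈ [−k,0]} |φ(θ)|. -/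
noncomputable def normSemi (φ : ℝ → ℝ) (k : ℕ) : ℝ :=
  ⨆ θ : Set.Icc (-(k:ℝ)) (0:ℝ), |φ (θ : ℝ)|

/-- n(k) is the smallest natural number such that τ_i ≥ kτ₁ for all i ≥ n(k). -/
def nSpec (τ : ℕ → ℝ) (n : ℕ → ℕ) : Prop :=
  ∀ k : ℕ, (∀ i, n k ≤ i → (k : ℝ) * τ 0 ≤ τ i) ∧
    ∀ m : ℕ, (∀ i, m ≤ i → (k : ℝ) * τ 0 ≤ τ i) → n k ≤ m

/-- Membership in the Fréchet space F: φ is continuous on (-∞,0] and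
p_k(φ) < ∞ (i.e. the defining series is summable) for every k. -/
def memF (b τ : ℕ → ℝ) (n : ℕ → ℕ) (φ : ℝ → ℝ) : Prop :=
  ContinuousOn φ (Set.Iic 0) ∧
    ∀ k : ℕ, Summable fun i => pTerm b τ φ k (n k + i)

/-- A solution of the infinite-delay equation with initial function φ. -/
def IsSolution (a : ℝ) (b τ : ℕ → ℝ) (φ x : ℝ → ℝ) : Prop :=
  Continuous x ∧ (∀ θ ≤ (0:ℝ), x θ = φ θ) ∧
  (∀ t ≥ (0:ℝ), Summable fun i => b i * x (t - τ i)) ∧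
  (∀ t ≥ (0:ℝ), HasDerivWithinAt x (a * x t + ∑' i, b i * x (t - τ i)) (Set.Ici 0) t) ∧
  ContinuousOn (fun t => a * x t + ∑' i, b i * x (t - τ i)) (Set.Ici 0)

lemma pTerm_nonneg (b τ : ℕ → ℝ) (φ : ℝ → ℝ) (k i : ℕ) : 0 ≤ pTerm b τ φ k i :=
  Real.iSup_nonneg fun _ => abs_nonneg _

lemma pTerm_bdd (b τ : ℕ → ℝ) (φ : ℝ → ℝ) (hφc : ContinuousOn φ (Set.Iic 0))
    (k i : ℕ) (hi : (k:ℝ) * τ 0 ≤ τ i) :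
    BddAbove (Set.range fun s : Set.Icc (0:ℝ) ((k:ℝ) * τ 0) => |b i * φ ((s:ℝ) - τ i)|) := by
  have hmaps : ∀ s ∈ Set.Icc (0:ℝ) ((k:ℝ) * τ 0), s - τ i ∈ Set.Iic (0:ℝ) := by
    intro s hs; simp only [Set.mem_Iic]; linarith [hs.2]
  have hcont : ContinuousOn (fun s => |b i * φ (s - τ i)|) (Set.Icc (0:ℝ) ((k:ℝ) * τ 0)) := by
    refine (continuousOn_const.mul (hφc.comp (by fun_prop) hmaps)).abs
  refine ((isCompact_Icc.image_of_continuousOn hcont).bddAbove).mono ?_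
  rintro _ ⟨s, rfl⟩
  exact ⟨s, s.2, rfl⟩

lemma le_pTerm (b τ : ℕ → ℝ) (φ : ℝ → ℝ) (hφc : ContinuousOn φ (Set.Iic 0))
    (k i : ℕ) (hi : (k:ℝ) * τ 0 ≤ τ i) {s : ℝ} (hs : s ∈ Set.Icc (0:ℝ) ((k:ℝ) * τ 0)) :
    |b i * φ (s - τ i)| ≤ pTerm b τ φ k i :=
  le_ciSup (pTerm_bdd b τ φ hφc k i hi) (⟨s, hs⟩ : Set.Icc (0:ℝ) ((k:ℝ) * τ 0))

lemma pTerm_le (b τ : ℕ → ℝ) (ψ : ℝ → ℝ) (k i : ℕ) {C : ℝ} (hC : 0 ≤ C)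
    (h : ∀ s ∈ Set.Icc (0:ℝ) ((k:ℝ) * τ 0), |b i * ψ (s - τ i)| ≤ C) :
    pTerm b τ ψ k i ≤ C :=
  Real.iSup_le (fun s => h s s.2) hC

lemma summable_shift_iff (g : ℕ → ℝ) (m : ℕ) :
    Summable (fun i => g (m + i)) ↔ Summable g := by
  simpa [add_comm] using summable_nat_add_iff (f := g) m

lemma summable_of_tail_le {f g : ℕ → ℝ} (hf : ∀ i, 0 ≤ f i) (N : ℕ)
    (h : ∀ j, N ≤ j → f j ≤ g j) (hg : Summable g) : Summable f := by
  rw [← summable_nat_add_iff N]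
  exact Summable.of_nonneg_of_le (fun i => hf _) (fun i => h _ (Nat.le_add_left _ _))
    ((summable_nat_add_iff N).2 hg)

/-- With u(t) = S_t φ = x(t + ·) and Lψ = aψ(0) + Σᵢ bᵢψ(−τᵢ):
for t+θ > 0, [u(t)](θ) = φ(0) + ∫₀^{t+θ} L(u(s)) ds, and for t+θ ≤ 0,
[u(t)](θ) = φ(t+θ).  Consequently u is a mild solution of u' = Au, u(0) = φ:
with v(t) = ∫₀ᵗ u(s) ds (pointwise v(t)(θ) = ∫₀ᵗ x(s+θ) ds), v(t) ∈ D(A)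
(v(t) ∈ F, v(t)' ∈ F, v(t)'(0) = L(v(t))) and v'(t) = A(v(t)) + φ. -/
theorem mild_solution (a : ℝ) (b τ : ℕ → ℝ) (n : ℕ → ℕ)
    (hτ : StrictMono τ) (hτpos : ∀ i, 0 < τ i)
    (hτtop : Tendsto τ atTop atTop) (hn : nSpec τ n)
    (φ : ℝ → ℝ) (hφ : memF b τ n φ)
    (x : ℝ → ℝ) (hx : IsSolution a b τ φ x) :
    -- the integral representation of u(t) = x(t + ·)
    (∀ t ≥ (0:ℝ), ∀ θ ≤ (0:ℝ),
      (0 < t + θ → x (t + θ) =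
        φ 0 + ∫ s in (0:ℝ)..(t + θ), (a * x s + ∑' i, b i * x (s - τ i))) ∧
      (t + θ ≤ 0 → x (t + θ) = φ (t + θ))) ∧
    -- u is a mild solution: v(t)(θ) = ∫₀ᵗ x(s+θ) ds lies in D(A) and
    -- d/dt v(t) = A v(t) + φ (pointwise in θ)
    (∀ t ≥ (0:ℝ),
      memF b τ n (fun θ => ∫ s in (0:ℝ)..t, x (s + θ)) ∧
      memF b τ n (fun θ => deriv (fun θ' => ∫ s in (0:ℝ)..t, x (s + θ')) θ) ∧
      deriv (fun θ' => ∫ s in (0:ℝ)..t, x (s + θ')) 0 =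
        a * (∫ s in (0:ℝ)..t, x s) + ∑' i, b i * ∫ s in (0:ℝ)..t, x (s - τ i) ∧
      ∀ θ ≤ (0:ℝ), HasDerivWithinAt (fun r => ∫ s in (0:ℝ)..r, x (s + θ))
        (deriv (fun θ' => ∫ s in (0:ℝ)..t, x (s + θ')) θ + φ θ) (Set.Ici 0) t) := by
  obtain ⟨hxc, hxφ, hxsum, hxderiv, hfcont⟩ := hx
  set f : ℝ → ℝ := fun s => a * x s + ∑' i, b i * x (s - τ i) with hfdef
  -- integrability of f on [0,T]
  have hfInt : ∀ T, 0 ≤ T → IntervalIntegrable f volume 0 T := by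
    intro T hT
    apply ContinuousOn.intervalIntegrable
    apply hfcont.mono
    rw [Set.uIcc_of_le hT]
    exact fun s hs => hs.1
  -- FTC representation
  have key : ∀ T, 0 ≤ T → x T = φ 0 + ∫ s in (0:ℝ)..T, f s := by
    intro T hT
    have h1 : ∫ s in (0:ℝ)..T, f s = x T - x 0 := by
      apply intervalIntegral.integral_eq_sub_of_hasDeriv_right_of_le hT
        (hxc.continuousOn)
        (fun s hs => ((hxderiv s hs.1.le).hasDerivAt (Ici_mem_nhds hs.1)).hasDerivWithinAt)
        (hfInt T hT)
    have h0 : x 0 = φ 0 := hxφ 0 le_rfl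
    rw [h1, h0]; ring
  constructor
  · intro t ht θ hθ
    exact ⟨fun h => key (t + θ) h.le, fun h => hxφ _ h⟩
  · intro t ht
    -- the primitive F
    set F : ℝ → ℝ := fun y => ∫ s in (0:ℝ)..y, x s with hFdef
    have hF : ∀ y, HasDerivAt F (x y) y := fun y =>
      intervalIntegral.integral_hasDerivAt_right (hxc.intervalIntegrable 0 y)
        (hxc.stronglyMeasurableAtFilter _ _) hxc.continuousAt
    have hveq : (fun θ' => ∫ s in (0:ℝ)..t, x (s + θ')) = fun θ' => F (t + θ') - F θ' := by
      funext θ'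
      rw [intervalIntegral.integral_comp_add_right, zero_add,
        ← intervalIntegral.integral_interval_sub_left (hxc.intervalIntegrable 0 (t + θ'))
          (hxc.intervalIntegrable 0 θ')]
    have hderiv_v : ∀ θ : ℝ,
        HasDerivAt (fun θ' => ∫ s in (0:ℝ)..t, x (s + θ')) (x (t + θ) - x θ) θ := by
      intro θ
      rw [hveq]
      have h1 : HasDerivAt (fun θ' : ℝ => F (t + θ')) (x (t + θ)) θ := by
        have := (hF (t + θ)).comp θ ((hasDerivAt_id θ).const_add t)
        simp at this; exact this
      exact h1.sub (hF θ)
    have hw : (fun θ => deriv (fun θ' => ∫ s in (0:ℝ)..t, x (s + θ')) θ)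
        = fun θ => x (t + θ) - x θ := funext fun θ => (hderiv_v θ).deriv
    -- choice of k'
    have hk'ex : ∀ k : ℕ, ∃ k' : ℕ, t + (k:ℝ) * τ 0 ≤ (k':ℝ) * τ 0 := by
      intro k
      obtain ⟨k', h⟩ := exists_nat_ge ((t + (k:ℝ) * τ 0) / τ 0)
      exact ⟨k', by rw [div_le_iff₀ (hτpos 0)] at h; linarith⟩
    refine ⟨⟨?_, ?_⟩, ⟨?_, ?_⟩, ?_, ?_⟩
    · -- continuity of v
      rw [hveq]
      have : Continuous fun θ' => F (t + θ') - F θ' := by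
        have hFc : Continuous F := by
          rw [continuous_iff_continuousAt]; exact fun y => (hF y).continuousAt
        fun_prop
      exact this.continuousOn
    · -- summability of v
      intro k
      rw [summable_shift_iff]
      obtain ⟨k', hk'⟩ := hk'ex k
      have hnk' := (hn k').1
      refine summable_of_tail_le (pTerm_nonneg b τ _ k) (n k')
        (fun j hj => ?_)
        ((((summable_shift_iff _ (n k')).1 (hφ.2 k')).mul_left t))
      have hτj : (k':ℝ) * τ 0 ≤ τ j := hnk' j hj
      refine pTerm_le b τ _ k j (mul_nonneg ht (pTerm_nonneg b τ φ k' j)) ?_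
      intro s hs
      rw [show b j * ∫ σ in (0:ℝ)..t, x (σ + (s - τ j))
            = ∫ σ in (0:ℝ)..t, b j * x (σ + (s - τ j)) from
          (intervalIntegral.integral_const_mul _ _).symm]
      
      have := intervalIntegral.norm_integral_le_of_norm_le_const
        (a := 0) (b := t) (C := pTerm b τ φ k' j)
        (f := fun σ => b j * x (σ + (s - τ j))) ?_
      · rw [Real.norm_eq_abs] at this
        calc |∫ σ in (0:ℝ)..t, b j * x (σ + (s - τ j))|
            ≤ pTerm b τ φ k' j * |t - 0| := this
          _ = t * pTerm b τ φ k' j := by rw [sub_zero, abs_of_nonneg ht]; ring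
      · intro σ hσ
        rw [Set.uIoc_of_le ht] at hσ
        have hσ1 : 0 < σ := hσ.1
        have hσ2 : σ ≤ t := hσ.2
        have harg : σ + (s - τ j) = (σ + s) - τ j := by ring
        have hle : σ + s - τ j ≤ 0 := by linarith [hs.2]
        show ‖b j * x (σ + (s - τ j))‖ ≤ pTerm b τ φ k' j
        rw [Real.norm_eq_abs, harg, hxφ _ hle]
        exact le_pTerm b τ φ hφ.1 k' j hτj ⟨by linarith [hs.1], by linarith [hs.2]⟩
    · -- continuity of w
      rw [hw]
      exact ((hxc.comp (continuous_const.add continuous_id)).sub hxc).continuousOn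
    · -- summability of w
      intro k
      rw [hw, summable_shift_iff]
      obtain ⟨k', hk'⟩ := hk'ex k
      have hnk' := (hn k').1
      refine summable_of_tail_le (pTerm_nonneg b τ _ k) (n k')
        (fun j hj => ?_)
        ((((summable_shift_iff _ (n k')).1 (hφ.2 k')).mul_left 2))
      have hτj : (k':ℝ) * τ 0 ≤ τ j := hnk' j hj
      refine pTerm_le b τ _ k j (mul_nonneg (by norm_num) (pTerm_nonneg b τ φ k' j)) ?_
      intro s hs
      have h1 : t + (s - τ j) = (t + s) - τ j := by ring
      have hle1 : (t + s) - τ j ≤ 0 := by linarith [hs.2]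
      have hle2 : s - τ j ≤ 0 := by linarith [hs.2, hτpos 0, ht]
      calc |b j * (x (t + (s - τ j)) - x (s - τ j))|
          = |b j * x ((t + s) - τ j) - b j * x (s - τ j)| := by rw [mul_sub, h1]
        _ ≤ |b j * x ((t + s) - τ j)| + |b j * x (s - τ j)| := abs_sub _ _
        _ ≤ pTerm b τ φ k' j + pTerm b τ φ k' j := by
            rw [hxφ _ hle1, hxφ _ hle2]
            exact add_le_add
              (le_pTerm b τ φ hφ.1 k' j hτj ⟨by linarith [hs.1], by linarith [hs.2]⟩)
              (le_pTerm b τ φ hφ.1 k' j hτj ⟨hs.1, by linarith [hs.2]⟩)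
        _ = 2 * pTerm b τ φ k' j := by ring
    · -- the derivative identity at 0
      have hc : deriv (fun θ' => ∫ s in (0:ℝ)..t, x (s + θ')) 0 = x t - x 0 := by
        have := (hderiv_v 0).deriv
        rwa [add_zero] at this
      -- interval integrable pieces
      have hint1 : IntervalIntegrable (fun s => a * x s) volume 0 t :=
        (continuous_const.mul hxc).intervalIntegrable 0 t
      have hint2 : IntervalIntegrable (fun s => ∑' i, b i * x (s - τ i)) volume 0 t := by
        have := (hfInt t ht).sub hint1
        have heq : (fun s => f s - a * x s) = fun s => ∑' i, b i * x (s - τ i) := by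
          funext s; simp [hfdef]
        rwa [heq] at this
      -- summable sup-norms for the swap
      obtain ⟨k', hk'⟩ := hk'ex 0
      rw [Nat.cast_zero, zero_mul, add_zero] at hk'
      have hnk' := (hn k').1
      set G : ℕ → C(ℝ, ℝ) := fun i =>
        ⟨fun s => b i * x (s - τ i), by fun_prop⟩ with hGdef
      have hGsum : Summable fun i =>
          ‖(G i).restrict (⟨uIcc 0 t, isCompact_uIcc⟩ : TopologicalSpace.Compacts ℝ)‖ := by
        refine summable_of_tail_le (fun i => norm_nonneg _) (n k')
          (fun j hj => ?_) ((summable_shift_iff _ (n k')).1 (hφ.2 k'))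
        have hτj : (k':ℝ) * τ 0 ≤ τ j := hnk' j hj
        refine (ContinuousMap.norm_le _ (pTerm_nonneg b τ φ k' j)).2 ?_
        rintro ⟨s, hs⟩
        have hs' : s ∈ Set.Icc (0:ℝ) t := by
          simpa [Set.uIcc_of_le ht] using hs
        have hle : s - τ j ≤ 0 := by linarith [hs'.2, hk']
        show ‖b j * x (s - τ j)‖ ≤ _
        rw [Real.norm_eq_abs, hxφ _ hle]
        exact le_pTerm b τ φ hφ.1 k' j hτj ⟨hs'.1, by linarith [hs'.2]⟩
      have hswap : ∫ s in (0:ℝ)..t, (∑' i, b i * x (s - τ i))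
          = ∑' i, b i * ∫ s in (0:ℝ)..t, x (s - τ i) := by
        have h := intervalIntegral.tsum_intervalIntegral_eq_of_summable_norm hGsum
        simp only [hGdef, ContinuousMap.coe_mk] at h
        rw [← h]
        exact tsum_congr fun i => intervalIntegral.integral_const_mul _ _
      have hxt := key t ht
      have h0 : x 0 = φ 0 := hxφ 0 le_rfl
      have hsplit : ∫ s in (0:ℝ)..t, f s
          = a * (∫ s in (0:ℝ)..t, x s) + ∑' i, b i * ∫ s in (0:ℝ)..t, x (s - τ i) := by
        rw [hfdef]
        rw [intervalIntegral.integral_add hint1 hint2,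
          intervalIntegral.integral_const_mul, hswap]
      rw [hc, hxt, h0, hsplit]; ring
    · -- the mild-solution derivative in t
      intro θ hθ
      have hcontθ : Continuous fun s => x (s + θ) := hxc.comp (continuous_add_right θ)
      have hd : HasDerivAt (fun r => ∫ s in (0:ℝ)..r, x (s + θ)) (x (t + θ)) t := by
        have := intervalIntegral.integral_hasDerivAt_right
          (hcontθ.intervalIntegrable 0 t) (hcontθ.stronglyMeasurableAtFilter _ _)
          hcontθ.continuousAt
        simpa using this
      have hval : deriv (fun θ' => ∫ s in (0:ℝ)..t, x (s + θ')) θ + φ θ = x (t + θ) := by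
        rw [(hderiv_v θ).deriv, ← hxφ θ hθ]; ring
      rw [hval]
      exact hd.hasDerivWithinAt
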